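/- Define f(r) = (1/2)·sin(2r)/√(cos²r + 4sin²r) on (0, π/2). Then for all r ∈ (0, π/2): -f''(r)/f(r) > 7/4 and (1 - f'(r)²)/f(r)² ≥ 9. In particular both quantities exceed 7/4, and the infimum of -f''/f over (0, π/2) equals 7/4. -/

import Mathlib

open Real Set

open Real

lemma gpos (r : ℝ) : 0 < Real.cos r ^ 2 + 4 * Real.sin r ^ 2 := by
  nlinarith [sin_sq_add_cos_sq r, sq_nonneg (Real.sin r)]

lemma hd1 (r : ℝ) : HasDerivAt (fun r => (1/2) * Real.sin (2*r) /
      Real.sqrt (Real.cos r ^ 2 + 4 * Real.sin r ^ 2))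
    ((1 + Real.sin r ^ 2) * (1 - 3 * Real.sin r ^ 2) /
      Real.sqrt (Real.cos r ^ 2 + 4 * Real.sin r ^ 2) ^ 3) r := by
  have hg : 0 < Real.cos r ^ 2 + 4 * Real.sin r ^ 2 := gpos r
  have hsq : 0 < Real.sqrt (Real.cos r ^ 2 + 4 * Real.sin r ^ 2) := Real.sqrt_pos.mpr hg
  have hN : HasDerivAt (fun r : ℝ => (1/2) * Real.sin (2*r)) ((1/2) * (Real.cos (2*r) * 2)) r := by
    have := (((Real.hasDerivAt_sin (2*r)).comp r ((hasDerivAt_id r).const_mul 2))).const_mul (1/2)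
    simpa [Function.comp] using this
  have hG : HasDerivAt (fun r : ℝ => Real.cos r ^ 2 + 4 * Real.sin r ^ 2)
      ((2 * Real.cos r ^ 1 * (-Real.sin r)) + 4 * (2 * Real.sin r ^ 1 * Real.cos r)) r := by
    exact (((Real.hasDerivAt_cos r).pow 2)).add (((Real.hasDerivAt_sin r).pow 2).const_mul 4)
  have hD := hG.sqrt (ne_of_gt hg)
  have h := hN.div hD (ne_of_gt hsq)
  convert h using 1
  · rfl
  · rfl
  · rfl
  have h2 : Real.sqrt (Real.cos r ^ 2 + 4 * Real.sin r ^ 2) ^ 2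
      = Real.cos r ^ 2 + 4 * Real.sin r ^ 2 := Real.sq_sqrt hg.le
  have hc : Real.cos r ^ 2 = 1 - Real.sin r ^ 2 := by nlinarith [sin_sq_add_cos_sq r]
  rw [Real.sin_two_mul, Real.cos_two_mul]
  generalize hq : Real.sqrt (Real.cos r ^ 2 + 4 * Real.sin r ^ 2) = q at h2 hsq ⊢
  field_simp
  linear_combination (-(2*Real.cos r^2-1)) * h2 + (-2*Real.cos r^2 - 3*Real.sin r^2 - 1) * hc

lemma hd2 (r : ℝ) : HasDerivAt (fun r => (1 + Real.sin r ^ 2) * (1 - 3 * Real.sin r ^ 2) /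
      Real.sqrt (Real.cos r ^ 2 + 4 * Real.sin r ^ 2) ^ 3)
    (-(Real.sin r * Real.cos r * (13 + 6 * Real.sin r ^ 2 + 9 * Real.sin r ^ 4)) /
      Real.sqrt (Real.cos r ^ 2 + 4 * Real.sin r ^ 2) ^ 5) r := by
  have hg : 0 < Real.cos r ^ 2 + 4 * Real.sin r ^ 2 := gpos r
  have hsq : 0 < Real.sqrt (Real.cos r ^ 2 + 4 * Real.sin r ^ 2) := Real.sqrt_pos.mpr hg
  have hA : HasDerivAt (fun r : ℝ => 1 + Real.sin r ^ 2) (2 * Real.sin r ^ 1 * Real.cos r) r :=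
    ((Real.hasDerivAt_sin r).pow 2).const_add 1
  have hB : HasDerivAt (fun r : ℝ => 1 - 3 * Real.sin r ^ 2)
      (-(3 * (2 * Real.sin r ^ 1 * Real.cos r))) r := by
    simpa using (((Real.hasDerivAt_sin r).pow 2).const_mul 3).const_sub 1
  have hN := hA.mul hB
  have hG : HasDerivAt (fun r : ℝ => Real.cos r ^ 2 + 4 * Real.sin r ^ 2)
      ((2 * Real.cos r ^ 1 * (-Real.sin r)) + 4 * (2 * Real.sin r ^ 1 * Real.cos r)) r :=
    (((Real.hasDerivAt_cos r).pow 2)).add (((Real.hasDerivAt_sin r).pow 2).const_mul 4)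
  have hD := (hG.sqrt (ne_of_gt hg)).pow 3
  have h := hN.div hD (by simp only [Pi.pow_apply]; positivity)
  convert h using 1
  · rfl
  · rfl
  · rfl
  have h2 : Real.sqrt (Real.cos r ^ 2 + 4 * Real.sin r ^ 2) ^ 2
      = Real.cos r ^ 2 + 4 * Real.sin r ^ 2 := Real.sq_sqrt hg.le
  have hc : Real.cos r ^ 2 = 1 - Real.sin r ^ 2 := by nlinarith [sin_sq_add_cos_sq r]
  simp only [Pi.pow_apply, Pi.mul_apply]
  generalize hq : Real.sqrt (Real.cos r ^ 2 + 4 * Real.sin r ^ 2) = q at h2 hsq ⊢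
  field_simp
  linear_combination (4*Real.sin r*Real.cos r*q^2*(1+3*Real.sin r^2)) * h2 + (4*Real.sin r*Real.cos r*q^2*(1+3*Real.sin r^2)) * hc


lemma ratioA (f : ℝ → ℝ)
    (hf : ∀ r, f r = (1/2) * Real.sin (2*r) /
      Real.sqrt (Real.cos r ^ 2 + 4 * Real.sin r ^ 2))
    (hD2 : ∀ x, deriv (deriv f) x
      = -(Real.sin x * Real.cos x * (13 + 6 * Real.sin x ^ 2 + 9 * Real.sin x ^ 4)) /
        Real.sqrt (Real.cos x ^ 2 + 4 * Real.sin x ^ 2) ^ 5)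
    (r : ℝ) (hr : r ∈ Set.Ioo 0 (Real.pi/2)) :
    -(deriv (deriv f) r) / f r
      = (13 + 6 * Real.sin r ^ 2 + 9 * Real.sin r ^ 4) / (1 + 3 * Real.sin r ^ 2) ^ 2 := by
  have hs : 0 < Real.sin r := Real.sin_pos_of_pos_of_lt_pi hr.1 (hr.2.trans (by linarith [Real.pi_pos]))
  have hc : 0 < Real.cos r := Real.cos_pos_of_mem_Ioo ⟨by linarith [hr.1, Real.pi_pos], hr.2⟩
  have hg : 0 < Real.cos r ^ 2 + 4 * Real.sin r ^ 2 := by positivity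
  have hq : 0 < Real.sqrt (Real.cos r ^ 2 + 4 * Real.sin r ^ 2) := Real.sqrt_pos.mpr hg
  have hq2 : Real.sqrt (Real.cos r ^ 2 + 4 * Real.sin r ^ 2) ^ 2 = 1 + 3 * Real.sin r ^ 2 := by
    rw [Real.sq_sqrt hg.le]; nlinarith [Real.sin_sq_add_cos_sq r]
  rw [hD2 r, hf r, Real.sin_two_mul]
  generalize hqq : Real.sqrt (Real.cos r ^ 2 + 4 * Real.sin r ^ 2) = q at hq hq2 ⊢
  field_simp
  linear_combination (-(q^2 + (1 + 3 * Real.sin r ^ 2))) * hq2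

/-- For the warping function `f(r) = (1/2)·sin(2r)/√(cos²r + 4sin²r)` of the orbit
space `X = S⁶/SU(2)`: on `(0, π/2)` one has `-f''/f > 7/4` and `(1 - f'²)/f² ≥ 9`,
and the infimum of `-f''/f` over `(0, π/2)` equals `7/4`. -/
theorem stmt5 (f : ℝ → ℝ)
    (hf : ∀ r, f r = (1/2) * Real.sin (2*r) /
      Real.sqrt (Real.cos r ^ 2 + 4 * Real.sin r ^ 2)) :
    (∀ r ∈ Set.Ioo 0 (Real.pi/2),
        7/4 < -(deriv (deriv f) r) / f r ∧
        9 ≤ (1 - (deriv f r)^2) / (f r)^2) ∧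
    sInf ((fun r => -(deriv (deriv f) r) / f r) '' Set.Ioo 0 (Real.pi/2)) = 7/4 := by
  have hfe : f = fun r => (1/2) * Real.sin (2*r) /
      Real.sqrt (Real.cos r ^ 2 + 4 * Real.sin r ^ 2) := funext hf
  have hD1 : ∀ x, deriv f x = (1 + Real.sin x ^ 2) * (1 - 3 * Real.sin x ^ 2) /
      Real.sqrt (Real.cos x ^ 2 + 4 * Real.sin x ^ 2) ^ 3 := by
    intro x; rw [hfe]; exact (hd1 x).deriv
  have hD1e : deriv f = fun x => (1 + Real.sin x ^ 2) * (1 - 3 * Real.sin x ^ 2) /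
      Real.sqrt (Real.cos x ^ 2 + 4 * Real.sin x ^ 2) ^ 3 := funext hD1
  have hD2 : ∀ x, deriv (deriv f) x
      = -(Real.sin x * Real.cos x * (13 + 6 * Real.sin x ^ 2 + 9 * Real.sin x ^ 4)) /
        Real.sqrt (Real.cos x ^ 2 + 4 * Real.sin x ^ 2) ^ 5 := by
    intro x; rw [hD1e]; exact (hd2 x).deriv
  have hratio := ratioA f hf hD2
  have main : ∀ r ∈ Set.Ioo 0 (Real.pi/2),
      7/4 < -(deriv (deriv f) r) / f r ∧ 9 ≤ (1 - (deriv f r)^2) / (f r)^2 := by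
    intro r hr
    have hs : 0 < Real.sin r :=
      Real.sin_pos_of_pos_of_lt_pi hr.1 (hr.2.trans (by linarith [Real.pi_pos]))
    have hc : 0 < Real.cos r :=
      Real.cos_pos_of_mem_Ioo ⟨by linarith [hr.1, Real.pi_pos], hr.2⟩
    have hcs : Real.cos r ^ 2 = 1 - Real.sin r ^ 2 := by
      nlinarith [Real.sin_sq_add_cos_sq r]
    have hg : 0 < Real.cos r ^ 2 + 4 * Real.sin r ^ 2 := gpos r
    have hq : 0 < Real.sqrt (Real.cos r ^ 2 + 4 * Real.sin r ^ 2) := Real.sqrt_pos.mpr hg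
    have hq2 : Real.sqrt (Real.cos r ^ 2 + 4 * Real.sin r ^ 2) ^ 2 = 1 + 3 * Real.sin r ^ 2 := by
      rw [Real.sq_sqrt hg.le]; linarith [hcs]
    constructor
    · rw [hratio r hr]
      have ht1 : Real.sin r ^ 2 < 1 := by nlinarith
      rw [lt_div_iff₀ (by positivity)]
      nlinarith [sq_nonneg (Real.sin r ^ 2), sq_nonneg (Real.sin r)]
    · rw [hD1 r, hf r, Real.sin_two_mul]
      generalize hqq : Real.sqrt (Real.cos r ^ 2 + 4 * Real.sin r ^ 2) = q at hq hq2
      set s := Real.sin r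
      set c := Real.cos r
      have e1 : ((1:ℝ)/2 * (2*s*c) / q)^2 = (s*c)^2 / q^2 := by ring
      have e2 : ((1 + s^2) * (1 - 3*s^2) / q^3)^2 = ((1 + s^2) * (1 - 3*s^2))^2 / (q^2)^3 := by
        ring
      rw [e1, e2, hq2]
      rw [le_div_iff₀ (by positivity)]
      have hc2 : (s*c)^2 = s^2*(1-s^2) := by rw [mul_pow, hcs]
      rw [hc2]
      have key : 9 * (s^2*(1-s^2)/(1+3*s^2)) = 1 - ((1+s^2)*(1-3*s^2))^2/(1+3*s^2)^3
          - (4*s^2*(3*s^2-1)^2*(2*s^2+1))/(1+3*s^2)^3 := by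
        have h13 : (0:ℝ) < 1 + 3*s^2 := by positivity
        field_simp
        ring
      rw [key]
      have hpos : 0 ≤ (4*s^2*(3*s^2-1)^2*(2*s^2+1))/(1+3*s^2)^3 := by positivity
      linarith
  refine ⟨main, ?_⟩
  have hmem : Real.pi/4 ∈ Set.Ioo 0 (Real.pi/2) :=
    ⟨by linarith [Real.pi_pos], by linarith [Real.pi_pos]⟩
  have hne : ((fun r => -(deriv (deriv f) r) / f r) '' Set.Ioo 0 (Real.pi/2)).Nonempty :=
    ⟨_, ⟨Real.pi/4, hmem, rfl⟩⟩
  have hbdd : BddBelow ((fun r => -(deriv (deriv f) r) / f r) '' Set.Ioo 0 (Real.pi/2)) := by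
    refine ⟨7/4, ?_⟩
    rintro x ⟨r, hr, rfl⟩
    exact (main r hr).1.le
  apply le_antisymm
  · rw [Real.sInf_le_iff hbdd hne]
    intro ε hε
    set δ := min (Real.sqrt (ε/19)) 1 with hδdef
    have hδ0 : 0 < δ := lt_min (Real.sqrt_pos.mpr (by linarith)) one_pos
    have hδ1 : δ ≤ 1 := min_le_right _ _
    have hr : Real.pi/2 - δ ∈ Set.Ioo 0 (Real.pi/2) :=
      ⟨by nlinarith [Real.pi_gt_three], by linarith⟩
    refine ⟨_, ⟨Real.pi/2 - δ, hr, rfl⟩, ?_⟩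
    show -(deriv (deriv f) (Real.pi/2 - δ)) / f (Real.pi/2 - δ) < 7/4 + ε
    rw [hratio _ hr]
    set t := Real.sin (Real.pi/2 - δ) ^ 2 with htdef
    have ht0 : 0 ≤ t := sq_nonneg _
    have ht1 : t ≤ 1 := by
      nlinarith [Real.sin_sq_add_cos_sq (Real.pi/2 - δ), sq_nonneg (Real.cos (Real.pi/2 - δ))]
    have h1t : 1 - t ≤ ε/19 := by
      have hcos : Real.cos (Real.pi/2 - δ) = Real.sin δ := Real.cos_pi_div_two_sub δ
      have e3 : 1 - t = Real.sin δ ^ 2 := by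
        rw [← hcos, htdef]; nlinarith [Real.sin_sq_add_cos_sq (Real.pi/2 - δ)]
      have hsd : Real.sin δ ≤ δ := Real.sin_le hδ0.le
      have hsd0 : 0 ≤ Real.sin δ :=
        Real.sin_nonneg_of_nonneg_of_le_pi hδ0.le (by nlinarith [Real.pi_gt_three])
      have h4 : Real.sin δ ^ 2 ≤ δ ^ 2 := pow_le_pow_left₀ hsd0 hsd 2
      have h5 : δ ^ 2 ≤ ε/19 := by
        have h6 : δ ≤ Real.sqrt (ε/19) := min_le_left _ _
        have h7 := Real.sq_sqrt (show (0:ℝ) ≤ ε/19 by linarith)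
        nlinarith [hδ0.le]
      linarith [e3 ▸ h4]
    rw [div_lt_iff₀ (by positivity)]
    nlinarith [mul_nonneg ht0 hε.le, sq_nonneg (1-t),
      mul_nonneg (sub_nonneg.mpr ht1) (sub_nonneg.mpr ht1),
      mul_nonneg (mul_nonneg ht0 ht0) hε.le]
  · refine le_csInf hne ?_
    rintro x ⟨r, hr, rfl⟩
    exact (main r hr).1.le
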